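/- Let γ ∈ (0,2) and let φ : ℝ → ℝ be bounded and twice continuously differentiable with bounded first and second derivatives. Then for every x ∈ ℝ: (i) the limits Λ^γφ(x) := lim_{ε→0⁺} ∫_{|y|≥ε} (φ(x) − φ(x+y))/|y|^{1+γ} dy and Λ^γ(φ²)(x) := lim_{ε→0⁺} ∫_{|y|≥ε} (φ(x)² − φ(x+y)²)/|y|^{1+γ} dy both exist; (ii) the integral D_γ(φ)(x) := ∫_ℝ (φ(x) − φ(x+y))²/|y|^{1+γ} dy converges absolutely; and (iii) the pointwise identity 2·φ(x)·Λ^γφ(x) = Λ^γ(φ²)(x) + D_γ(φ)(x) holds. -/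

import Mathlib

open Real MeasureTheory Set Filter Topology

lemma tail_eq (ε : ℝ) : {y : ℝ | ε ≤ |y|} = Set.Iic (-ε) ∪ Set.Ici ε := by
  ext y
  simp only [Set.mem_setOf_eq, Set.mem_union, Set.mem_Iic, Set.mem_Ici, le_abs]
  constructor
  · rintro (h | h)
    exacts [Or.inr h, Or.inl (by linarith)]
  · rintro (h | h)
    exacts [Or.inr (by linarith), Or.inl h]

lemma tail_meas (ε : ℝ) : MeasurableSet {y : ℝ | ε ≤ |y|} := by
  rw [tail_eq]; exact measurableSet_Iic.union measurableSet_Ici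

lemma tail_symm (ε : ℝ) : ∀ y : ℝ, -y ∈ {y : ℝ | ε ≤ |y|} ↔ y ∈ {y : ℝ | ε ≤ |y|} := by
  intro y; simp [abs_neg]

lemma tail_compl (ε : ℝ) : {y : ℝ | ε ≤ |y|}ᶜ = Set.Ioo (-ε) ε := by
  ext y; simp [not_le, abs_lt]

/-- transfer integrability on a set to its negation, for even functions -/
lemma integrableOn_neg_even {g : ℝ → ℝ} (hgeven : ∀ y, g (-y) = g y) {s : Set ℝ}
    (hs : MeasurableSet s) (hg : IntegrableOn g s) :
    IntegrableOn g (Neg.neg ⁻¹' s) := by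
  have h1 : Integrable (s.indicator g) := (integrable_indicator_iff hs).2 hg
  have h2 : Integrable (fun y : ℝ => s.indicator g (-y)) := h1.comp_neg
  have h3 : (fun y : ℝ => s.indicator g (-y)) = (Neg.neg ⁻¹' s).indicator g := by
    funext y
    by_cases hy : -y ∈ s
    · rw [Set.indicator_of_mem hy, Set.indicator_of_mem (by simpa using hy), hgeven]
    · rw [Set.indicator_of_notMem hy, Set.indicator_of_notMem (by simpa using hy)]
  rw [h3] at h2
  exact (integrable_indicator_iff (hs.preimage measurable_neg)).1 h2

/-- integrability of `|y|^r` on the tail set -/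
lemma integrableOn_abs_rpow_tail {r : ℝ} (hr : r < -1) {ε : ℝ} (hε : 0 < ε) :
    IntegrableOn (fun y : ℝ => |y| ^ r) {y : ℝ | ε ≤ |y|} := by
  have hIci : IntegrableOn (fun y : ℝ => |y| ^ r) (Set.Ici ε) := by
    rw [integrableOn_Ici_iff_integrableOn_Ioi]
    refine (integrableOn_Ioi_rpow_of_lt hr hε).congr_fun (fun y hy => ?_) measurableSet_Ioi
    rw [abs_of_pos (hε.trans hy)]
  have hIic : IntegrableOn (fun y : ℝ => |y| ^ r) (Set.Iic (-ε)) := by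
    have := integrableOn_neg_even (g := fun y : ℝ => |y| ^ r) (fun y => by simp [abs_neg])
      measurableSet_Ici hIci
    rwa [show Neg.neg ⁻¹' Set.Ici ε = Set.Iic (-ε) by ext y; simp [le_neg]] at this
  rw [tail_eq]
  exact hIic.union hIci

/-- integrability of `|y|^r` near zero -/
lemma integrableOn_abs_rpow_core {r : ℝ} (hr : -1 < r) :
    IntegrableOn (fun y : ℝ => |y| ^ r) (Set.Ioo (-1 : ℝ) 1) := by
  have h1 : IntegrableOn (fun y : ℝ => |y| ^ r) (Set.Ioo (0 : ℝ) 1) := by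
    refine ((intervalIntegral.integrableOn_Ioo_rpow_iff one_pos).2 hr).congr_fun (fun y hy => ?_) measurableSet_Ioo
    rw [abs_of_pos hy.1]
  have h2 : IntegrableOn (fun y : ℝ => |y| ^ r) (Set.Ioo (-1 : ℝ) 0) := by
    have := integrableOn_neg_even (g := fun y : ℝ => |y| ^ r) (fun y => by simp [abs_neg])
      measurableSet_Ioo h1
    rwa [show Neg.neg ⁻¹' Set.Ioo (0:ℝ) 1 = Set.Ioo (-1 : ℝ) 0 by
      ext y; simp [Set.mem_Ioo, neg_lt, lt_neg, and_comm]] at this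
  have h0 : IntegrableOn (fun y : ℝ => |y| ^ r) ({0} : Set ℝ) := by
    exact (integrableOn_singleton_iff (by simp)).2 (Or.inr (by simp))
  have : Set.Ioo (-1 : ℝ) 1 ⊆ Set.Ioo (-1 : ℝ) 0 ∪ {0} ∪ Set.Ioo (0 : ℝ) 1 := by
    intro y hy
    rcases lt_trichotomy y 0 with h | h | h
    · exact Or.inl (Or.inl ⟨hy.1, h⟩)
    · exact Or.inl (Or.inr (by simp [h]))
    · exact Or.inr ⟨h, hy.2⟩
  exact ((h2.union h0).union h1).mono_set this

/-- The truncated integrals of an integrable function converge to the full integral. -/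
lemma tendsto_tail_integral {g : ℝ → ℝ} (hg : Integrable g) :
    Tendsto (fun ε : ℝ => ∫ y in {y : ℝ | ε ≤ |y|}, g y)
      (nhdsWithin 0 (Set.Ioi 0)) (nhds (∫ y, g y)) := by
  have key : ∀ ε : ℝ, 0 < ε → (∫ y in {y : ℝ | ε ≤ |y|}, g y)
      = (∫ y, g y) - ∫ y in (-ε)..ε, g y := by
    intro ε hε
    have h1 := MeasureTheory.integral_add_compl (tail_meas ε) hg
    rw [tail_compl] at h1
    have h2 : (∫ y in (-ε)..ε, g y) = ∫ y in Set.Ioo (-ε) ε, g y := by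
      rw [intervalIntegral.integral_of_le (by linarith), MeasureTheory.integral_Ioc_eq_integral_Ioo]
    rw [h2]; linarith
  have hcont : ContinuousAt (fun ε : ℝ => ∫ y in (-ε)..ε, g y) 0 := by
    have c1 : Continuous fun ε : ℝ => ∫ y in (0:ℝ)..ε, g y := hg.continuous_primitive 0
    have c2 : Continuous fun ε : ℝ => ∫ y in (-ε)..(0:ℝ), g y := by
      have : ∀ ε : ℝ, (∫ y in (-ε)..(0:ℝ), g y) = -∫ y in (0:ℝ)..(-ε), g y := fun ε =>
        (intervalIntegral.integral_symm _ _)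
      simp only [this]; exact (c1.comp continuous_neg).neg
    have : Continuous fun ε : ℝ => ∫ y in (-ε)..ε, g y := by
      have : ∀ ε : ℝ, (∫ y in (-ε)..ε, g y)
          = (∫ y in (-ε)..(0:ℝ), g y) + ∫ y in (0:ℝ)..ε, g y := fun ε =>
        (intervalIntegral.integral_add_adjacent_intervals
          hg.intervalIntegrable hg.intervalIntegrable).symm
      simp only [this]; exact c2.add c1
    exact this.continuousAt
  have h0 : Tendsto (fun ε : ℝ => ∫ y in (-ε)..ε, g y) (nhdsWithin 0 (Set.Ioi 0)) (nhds 0) := by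
    have := hcont.tendsto
    simp only [neg_zero, intervalIntegral.integral_same] at this
    exact this.mono_left nhdsWithin_le_nhds
  have : Tendsto (fun ε : ℝ => (∫ y, g y) - ∫ y in (-ε)..ε, g y)
      (nhdsWithin 0 (Set.Ioi 0)) (nhds ((∫ y, g y) - 0)) := tendsto_const_nhds.sub h0
  rw [sub_zero] at this
  refine this.congr' ?_
  filter_upwards [self_mem_nhdsWithin] with ε (hε : ε ∈ Set.Ioi 0)
  exact (key ε hε).symm

/-- symmetrization of a set integral over a symmetric set -/
lemma setIntegral_symm {f : ℝ → ℝ} {s : Set ℝ} (hs : MeasurableSet s)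
    (hsym : ∀ y : ℝ, -y ∈ s ↔ y ∈ s) (hf : IntegrableOn f s) :
    ∫ y in s, f y = ∫ y in s, (f y + f (-y)) / 2 := by
  have hind : (fun y : ℝ => s.indicator f (-y)) = s.indicator (fun y => f (-y)) := by
    funext y
    by_cases hy : y ∈ s
    · rw [Set.indicator_of_mem ((hsym y).2 hy), Set.indicator_of_mem hy]
    · rw [Set.indicator_of_notMem (fun h => hy ((hsym y).1 h)), Set.indicator_of_notMem hy]
  have hfneg : IntegrableOn (fun y : ℝ => f (-y)) s := by
    have h1 : Integrable (s.indicator f) := (integrable_indicator_iff hs).2 hf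
    have h2 := h1.comp_neg
    rw [hind] at h2
    exact (integrable_indicator_iff hs).1 h2
  have heq : ∫ y in s, f (-y) = ∫ y in s, f y := by
    rw [← integral_indicator hs, ← integral_indicator hs, ← hind]
    exact integral_neg_eq_self (s.indicator f) volume
  rw [MeasureTheory.integral_div, MeasureTheory.integral_add hf hfneg, heq]
  ring

lemma abs_div_rpow_le {p : ℝ} (hp : 0 < p) {n B y : ℝ} (_hB : 0 ≤ B) (hn : |n| ≤ B) :
    |n / |y| ^ p| ≤ B * |y| ^ (-p) := by
  rcases eq_or_ne y 0 with rfl | hy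
  · simp [Real.zero_rpow hp.ne', Real.zero_rpow (neg_ne_zero.2 hp.ne')]
  · have hay : 0 < |y| := abs_pos.2 hy
    have hpos : 0 < |y| ^ p := Real.rpow_pos_of_pos hay _
    rw [abs_div, abs_of_nonneg hpos.le, Real.rpow_neg (abs_nonneg y), ← div_eq_mul_inv]
    gcongr

lemma core_div_bound {γ : ℝ} {n B y : ℝ} (_hB : 0 ≤ B) (hn : |n| ≤ B * y ^ 2) :
    |n / |y| ^ (1 + γ)| ≤ B * |y| ^ (1 - γ) := by
  rcases eq_or_ne y 0 with rfl | hy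
  · have hn0 : n = 0 := abs_nonpos_iff.1 (by simpa using hn)
    simp [hn0]
    positivity
  · have hay : 0 < |y| := abs_pos.2 hy
    have key : y ^ 2 / |y| ^ (1 + γ) = |y| ^ (1 - γ) := by
      rw [← sq_abs, ← Real.rpow_natCast |y| 2, ← Real.rpow_sub hay]
      push_cast
      congr 1
      ring
    have hpos : 0 < |y| ^ (1 + γ) := Real.rpow_pos_of_pos hay _
    rw [abs_div, abs_of_nonneg hpos.le]
    calc |n| / |y| ^ (1 + γ) ≤ (B * y ^ 2) / |y| ^ (1 + γ) := by gcongr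
    _ = B * (y ^ 2 / |y| ^ (1 + γ)) := by ring
    _ = B * |y| ^ (1 - γ) := by rw [key]

lemma meas_aux {n : ℝ → ℝ} (hn : Continuous n) (γ : ℝ) (hγ : 0 < γ) :
    AEStronglyMeasurable (fun y : ℝ => n y / |y| ^ (1 + γ)) volume := by
  apply (hn.measurable.div ?_).aestronglyMeasurable
  exact (continuous_abs.rpow_const fun y => Or.inr (by positivity)).measurable

lemma integrable_of_bounds {γ : ℝ} (hγ1 : 0 < γ) (hγ2 : γ < 2) {f : ℝ → ℝ}
    (hm : AEStronglyMeasurable f volume) {K : ℝ}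
    (h1 : ∀ y : ℝ, y ∈ Set.Ioo (-1:ℝ) 1 → |f y| ≤ K * |y| ^ (1 - γ))
    (h2 : ∀ y : ℝ, 1 ≤ |y| → |f y| ≤ K * |y| ^ (-(1 + γ))) :
    Integrable f := by
  have hcore : IntegrableOn f (Set.Ioo (-1:ℝ) 1) :=
    Integrable.mono' ((integrableOn_abs_rpow_core (r := 1 - γ) (by linarith)).const_mul K) hm.restrict
      ((ae_restrict_iff' measurableSet_Ioo).2 (Filter.Eventually.of_forall fun y hy => by
        simpa [Real.norm_eq_abs] using h1 y hy))
  have htail : IntegrableOn f {y : ℝ | 1 ≤ |y|} :=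
    Integrable.mono' ((integrableOn_abs_rpow_tail (r := -(1 + γ)) (by linarith) one_pos).const_mul K) hm.restrict
      ((ae_restrict_iff' (tail_meas 1)).2 (Filter.Eventually.of_forall fun y hy => by
        simpa [Real.norm_eq_abs] using h2 y hy))
  rw [← integrableOn_univ]
  refine (hcore.union htail).mono_set fun y _ => ?_
  rcases le_or_gt 1 |y| with h | h
  · exact Or.inr h
  · exact Or.inl ⟨(abs_lt.1 h).1, (abs_lt.1 h).2⟩

lemma integrableOn_tail_of_bound {γ : ℝ} (hγ1 : 0 < γ) {ε : ℝ} (hε : 0 < ε) {f : ℝ → ℝ}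
    (hm : AEStronglyMeasurable f volume) {K : ℝ}
    (h2 : ∀ y : ℝ, ε ≤ |y| → |f y| ≤ K * |y| ^ (-(1 + γ))) :
    IntegrableOn f {y : ℝ | ε ≤ |y|} :=
  Integrable.mono' ((integrableOn_abs_rpow_tail (r := -(1 + γ)) (by linarith) hε).const_mul K) hm.restrict
    ((ae_restrict_iff' (tail_meas ε)).2 (Filter.Eventually.of_forall fun y hy => by
      simpa [Real.norm_eq_abs] using h2 y hy))

lemma lipschitz_bound {φ : ℝ → ℝ} (hφ : Differentiable ℝ φ) {C : ℝ}
    (hbd' : ∀ x, |deriv φ x| ≤ C) (u v : ℝ) : |φ u - φ v| ≤ C * |u - v| := by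
  have := convex_univ.norm_image_sub_le_of_norm_deriv_le (f := φ)
    (fun t _ => hφ t) (fun t _ => by simpa [Real.norm_eq_abs] using hbd' t)
    (Set.mem_univ v) (Set.mem_univ u)
  simpa [Real.norm_eq_abs] using this

lemma taylor_bound {φ : ℝ → ℝ} (hφ : ContDiff ℝ 2 φ) {C : ℝ}
    (hbd'' : ∀ x, |deriv (deriv φ) x| ≤ C) (x y : ℝ) :
    |φ (x + y) - φ x - deriv φ x * y| ≤ C * y ^ 2 := by
  have hφ1 : Differentiable ℝ φ := hφ.differentiable (by norm_num)
  have hd : Differentiable ℝ (deriv φ) := by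
    have h : ContDiff ℝ ((1:ℕ) + 1) φ := by exact_mod_cast hφ
    rw [contDiff_succ_iff_deriv] at h
    exact h.2.2.differentiable (by norm_num)
  have hlip : ∀ u v : ℝ, |deriv φ u - deriv φ v| ≤ C * |u - v| :=
    lipschitz_bound hd hbd''
  set g : ℝ → ℝ := fun t => φ (x + t) - (φ x + deriv φ x * t) with hg_def
  have hg : ∀ t : ℝ, HasDerivAt g (deriv φ (x + t) - deriv φ x) t := by
    intro t
    have h1 : HasDerivAt (fun t : ℝ => φ (x + t)) (deriv φ (x + t)) t := by
      have := ((hφ1 (x + t)).hasDerivAt).comp t ((hasDerivAt_id t).const_add x)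
      rw [mul_one] at this; exact this
    have h2 : HasDerivAt (fun t : ℝ => φ x + deriv φ x * t) (deriv φ x) t := by
      have := (hasDerivAt_const t (φ x)).add ((hasDerivAt_id t).const_mul (deriv φ x))
      rw [zero_add, mul_one] at this; exact this
    exact h1.sub h2
  have hbound : ∀ t ∈ Set.uIcc (0:ℝ) y, ‖deriv φ (x + t) - deriv φ x‖ ≤ C * |y| := by
    intro t ht
    have h1 : |deriv φ (x + t) - deriv φ x| ≤ C * |t| := by
      simpa using hlip (x + t) x
    have h2 : |t| ≤ |y| := by
      rcases Set.mem_uIcc.mp ht with ⟨ha, hb⟩ | ⟨ha, hb⟩ <;> rw [abs_le] <;>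
        constructor <;> linarith [le_abs_self y, neg_abs_le y, abs_nonneg y]
    have hC : 0 ≤ C := le_trans (abs_nonneg _) (hbd'' 0)
    rw [Real.norm_eq_abs]
    calc |deriv φ (x + t) - deriv φ x| ≤ C * |t| := h1
    _ ≤ C * |y| := by gcongr
  have key := (convex_uIcc (0:ℝ) y).norm_image_sub_le_of_norm_hasDerivWithin_le
    (f := g) (f' := fun t => deriv φ (x + t) - deriv φ x) (C := C * |y|)
    (fun t _ => (hg t).hasDerivWithinAt) hbound Set.left_mem_uIcc Set.right_mem_uIcc
  have hg0 : g 0 = 0 := by simp [hg_def]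
  have hb : |g y| ≤ C * |y| * |y| := by simpa [hg0, Real.norm_eq_abs] using key
  calc |φ (x + y) - φ x - deriv φ x * y| = |g y| := by
        simp only [hg_def]; ring_nf
  _ ≤ C * |y| * |y| := hb
  _ = C * y ^ 2 := by rw [mul_assoc, abs_mul_abs_self]; ring

lemma symm_bound {φ : ℝ → ℝ} (hφ : ContDiff ℝ 2 φ) {C : ℝ}
    (hbd'' : ∀ x, |deriv (deriv φ) x| ≤ C) (x y : ℝ) :
    |2 * φ x - φ (x + y) - φ (x - y)| ≤ 2 * C * y ^ 2 := by
  have t1 := taylor_bound hφ hbd'' x y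
  have t2 := taylor_bound hφ hbd'' x (-y)
  rw [show x + -y = x - y by ring] at t2
  have : 2 * φ x - φ (x + y) - φ (x - y)
      = -((φ (x + y) - φ x - deriv φ x * y) + (φ (x - y) - φ x - deriv φ x * (-y))) := by ring
  rw [this, abs_neg]
  calc |(φ (x + y) - φ x - deriv φ x * y) + (φ (x - y) - φ x - deriv φ x * (-y))|
      ≤ |φ (x + y) - φ x - deriv φ x * y| + |φ (x - y) - φ x - deriv φ x * (-y)| := abs_add_le _ _
  _ ≤ C * y ^ 2 + C * (-y) ^ 2 := add_le_add t1 t2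
  _ = 2 * C * y ^ 2 := by ring

/-- Pointwise identity `2 φ(x) Λ^γ φ(x) = Λ^γ(φ²)(x) + D_γ(φ)(x)` for the fractional
Laplacian defined via the principal value singular integral, for bounded `C²` functions
with bounded first and second derivatives. -/
theorem statement0 (γ : ℝ) (hγ : γ ∈ Set.Ioo (0:ℝ) 2)
    (φ : ℝ → ℝ) (hφ : ContDiff ℝ 2 φ) (C : ℝ)
    (hbd : ∀ x, |φ x| ≤ C) (hbd' : ∀ x, |deriv φ x| ≤ C)
    (hbd'' : ∀ x, |deriv (deriv φ) x| ≤ C) (x : ℝ) :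
    ∃ L₁ L₂ : ℝ,
      Tendsto (fun ε : ℝ =>
          ∫ y in {y : ℝ | ε ≤ |y|}, (φ x - φ (x + y)) / |y| ^ (1 + γ))
        (nhdsWithin 0 (Set.Ioi 0)) (nhds L₁) ∧
      Tendsto (fun ε : ℝ =>
          ∫ y in {y : ℝ | ε ≤ |y|}, ((φ x) ^ 2 - (φ (x + y)) ^ 2) / |y| ^ (1 + γ))
        (nhdsWithin 0 (Set.Ioi 0)) (nhds L₂) ∧
      Integrable (fun y : ℝ => (φ x - φ (x + y)) ^ 2 / |y| ^ (1 + γ)) ∧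
      2 * φ x * L₁ = L₂ + ∫ y : ℝ, (φ x - φ (x + y)) ^ 2 / |y| ^ (1 + γ) := by
  obtain ⟨hγ1, hγ2⟩ := hγ
  have hφc : Continuous φ := hφ.continuous
  have hφ1 : Differentiable ℝ φ := hφ.differentiable (by norm_num)
  have hC : 0 ≤ C := le_trans (abs_nonneg _) (hbd 0)
  set f₁ : ℝ → ℝ := fun y => (φ x - φ (x + y)) / |y| ^ (1 + γ) with hf₁
  set f₂ : ℝ → ℝ := fun y => ((φ x) ^ 2 - (φ (x + y)) ^ 2) / |y| ^ (1 + γ) with hf₂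
  set f₃ : ℝ → ℝ := fun y => (φ x - φ (x + y)) ^ 2 / |y| ^ (1 + γ) with hf₃
  set g₁ : ℝ → ℝ := fun y => (φ x - (φ (x + y) + φ (x - y)) / 2) / |y| ^ (1 + γ) with hg₁
  -- continuity of numerators
  have hc1 : Continuous fun y : ℝ => φ (x + y) := hφc.comp (continuous_const.add continuous_id)
  have hc2 : Continuous fun y : ℝ => φ (x - y) := hφc.comp (continuous_const.sub continuous_id)
  have m₁ : AEStronglyMeasurable f₁ volume := meas_aux (continuous_const.sub hc1) γ hγ1
  have m₃ : AEStronglyMeasurable f₃ volume := meas_aux ((continuous_const.sub hc1).pow 2) γ hγ1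
  have mg : AEStronglyMeasurable g₁ volume :=
    meas_aux (continuous_const.sub ((hc1.add hc2).div_const 2)) γ hγ1
  -- bounds on numerators
  have hlip : ∀ u v, |φ u - φ v| ≤ C * |u - v| := lipschitz_bound hφ1 hbd'
  have B1 : ∀ y : ℝ, |φ x - φ (x + y)| ≤ 2 * C := by
    intro y
    have h1 := abs_le.1 (hbd x); have h2 := abs_le.1 (hbd (x + y))
    rw [abs_le]; constructor <;> linarith
  have B1' : ∀ y : ℝ, |φ x - φ (x + y)| ≤ C * |y| := by
    intro y
    have := hlip x (x + y)
    rwa [show x - (x + y) = -y by ring, abs_neg] at this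
  have Bg : ∀ y : ℝ, |φ x - (φ (x + y) + φ (x - y)) / 2| ≤ 2 * C := by
    intro y
    have h1 := abs_le.1 (hbd x); have h2 := abs_le.1 (hbd (x + y))
    have h3 := abs_le.1 (hbd (x - y))
    rw [abs_le]; constructor <;> linarith
  have Bg' : ∀ y : ℝ, |φ x - (φ (x + y) + φ (x - y)) / 2| ≤ C * y ^ 2 := by
    intro y
    have := symm_bound hφ hbd'' x y
    rw [show φ x - (φ (x + y) + φ (x - y)) / 2 = (2 * φ x - φ (x + y) - φ (x - y)) / 2 by ring,
      abs_div]
    calc |2 * φ x - φ (x + y) - φ (x - y)| / |2| ≤ 2 * C * y ^ 2 / 2 := by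
          rw [show |(2:ℝ)| = 2 by norm_num]; gcongr
    _ = C * y ^ 2 := by ring
  have B3 : ∀ y : ℝ, |(φ x - φ (x + y)) ^ 2| ≤ C ^ 2 * y ^ 2 := by
    intro y
    rw [abs_pow]
    calc |φ x - φ (x + y)| ^ 2 ≤ (C * |y|) ^ 2 := by
          have := B1' y; gcongr
    _ = C ^ 2 * y ^ 2 := by rw [mul_pow, sq_abs]
  have B3' : ∀ y : ℝ, |(φ x - φ (x + y)) ^ 2| ≤ 4 * C ^ 2 := by
    intro y
    rw [abs_pow]
    calc |φ x - φ (x + y)| ^ 2 ≤ (2 * C) ^ 2 := by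
          have := B1 y; gcongr
    _ = 4 * C ^ 2 := by ring
  have hp : (0:ℝ) < 1 + γ := by linarith
  -- integrability of g₁
  have hg₁int : Integrable g₁ := by
    refine integrable_of_bounds hγ1 hγ2 mg (K := 2 * C) (fun y _ => ?_) (fun y _ => ?_)
    · calc |g₁ y| ≤ C * |y| ^ (1 - γ) := core_div_bound hC (Bg' y)
      _ ≤ 2 * C * |y| ^ (1 - γ) := by
          have := Real.rpow_nonneg (abs_nonneg y) (1 - γ); nlinarith
    · exact abs_div_rpow_le hp (by linarith) (Bg y)
  -- integrability of f₃
  have hf₃int : Integrable f₃ := by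
    refine integrable_of_bounds hγ1 hγ2 m₃ (K := 4 * C ^ 2) (fun y _ => ?_) (fun y _ => ?_)
    · calc |f₃ y| ≤ C ^ 2 * |y| ^ (1 - γ) := core_div_bound (by positivity) (B3 y)
      _ ≤ 4 * C ^ 2 * |y| ^ (1 - γ) := by
          have := Real.rpow_nonneg (abs_nonneg y) (1 - γ); nlinarith
    · exact abs_div_rpow_le hp (by positivity) (B3' y)
  -- integrability of f₁ on tails
  have hf₁ε : ∀ ε : ℝ, 0 < ε → IntegrableOn f₁ {y : ℝ | ε ≤ |y|} := fun ε hε =>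
    integrableOn_tail_of_bound hγ1 hε m₁ (K := 2 * C)
      (fun y _ => abs_div_rpow_le hp (by linarith) (B1 y))
  -- symmetrization identity
  have hsymm : ∀ ε : ℝ, 0 < ε →
      (∫ y in {y : ℝ | ε ≤ |y|}, f₁ y) = ∫ y in {y : ℝ | ε ≤ |y|}, g₁ y := by
    intro ε hε
    rw [setIntegral_symm (tail_meas ε) (tail_symm ε) (hf₁ε ε hε)]
    congr 1
    funext y
    simp only [hf₁, hg₁, abs_neg, show x + -y = x - y by ring]
    ring
  -- pointwise algebraic identity
  have hpt : f₂ = fun y => 2 * φ x * f₁ y - f₃ y := by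
    funext y; simp only [hf₁, hf₂, hf₃]; ring
  have hεint : ∀ ε : ℝ, 0 < ε →
      (∫ y in {y : ℝ | ε ≤ |y|}, f₂ y)
        = 2 * φ x * (∫ y in {y : ℝ | ε ≤ |y|}, f₁ y) - ∫ y in {y : ℝ | ε ≤ |y|}, f₃ y := by
    intro ε hε
    rw [hpt, MeasureTheory.integral_sub ((hf₁ε ε hε).const_mul _) hf₃int.integrableOn]
    simp only [MeasureTheory.integral_const_mul]
  -- limits
  have T1 : Tendsto (fun ε : ℝ => ∫ y in {y : ℝ | ε ≤ |y|}, f₁ y)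
      (nhdsWithin 0 (Set.Ioi 0)) (nhds (∫ y, g₁ y)) := by
    refine (tendsto_tail_integral hg₁int).congr' ?_
    filter_upwards [self_mem_nhdsWithin] with ε (hε : ε ∈ Set.Ioi 0)
    exact (hsymm ε hε).symm
  have T3 : Tendsto (fun ε : ℝ => ∫ y in {y : ℝ | ε ≤ |y|}, f₃ y)
      (nhdsWithin 0 (Set.Ioi 0)) (nhds (∫ y, f₃ y)) := tendsto_tail_integral hf₃int
  have T2 : Tendsto (fun ε : ℝ => ∫ y in {y : ℝ | ε ≤ |y|}, f₂ y)
      (nhdsWithin 0 (Set.Ioi 0)) (nhds (2 * φ x * (∫ y, g₁ y) - ∫ y, f₃ y)) := by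
    refine ((T1.const_mul (2 * φ x)).sub T3).congr' ?_
    filter_upwards [self_mem_nhdsWithin] with ε (hε : ε ∈ Set.Ioi 0)
    exact (hεint ε hε).symm
  exact ⟨∫ y, g₁ y, 2 * φ x * (∫ y, g₁ y) - ∫ y, f₃ y, T1, T2, hf₃int, by ring⟩
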